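/- arXiv:2406.11347 — 3 statements merged into one kernel-verified Lean document; each statement's English description precedes it below -/
import Mathlib

section
/- Let $X$ be a strictly stationary ergodic process with values in $\mathbb{R}^N$, let $\widetilde\beta\subseteq\mathbb{R}^N$ be measurable, and let $\tau_{\widetilde\beta}(X,t)=\min\{s\ge 0: X_{t+s}\in\widetilde\beta\}$ be the forward hitting time and $\tau^-_{\widetilde\beta}(X,t)=\min\{s\ge 0: X_{t-s}\in\widetilde\beta\}$ the backward hitting time, and define the transit time $\tau^{\pm}_{\widetilde\beta}(X,t)=\max(\theta^+-\theta^- -1,0)$ where $\theta^-=\max\{s\le t: X_s\in\widetilde\beta\}$ and $\theta^+=\min\{s\ge t : X_s\in\widetilde\beta\}$. If $\mathbb{E}[\tau_{\widetilde\beta}(X,t)^\alpha]<\infty$ for some $\alpha\in[0,\infty)$, then $\mathbb{E}[\tau^{\pm}_{\widetilde\beta}(X,t)^\alpha]\le (\alpha+1)\,\mathbb{E}[\tau_{\widetilde\beta}(X,t)^\alpha]<\infty$. -/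
open MeasureTheory Filter
open scoped ENNReal

/-- Forward hitting time `τ_B(x,t) = min {s ≥ 0 : x (t+s) ∈ B}` (as `ℝ≥0∞`, `∞` if none). -/
noncomputable def fwdHit {X : Type*} (B : Set X) (t : ℤ) (x : ℤ → X) : ℝ≥0∞ :=
  sInf {r : ℝ≥0∞ | ∃ s : ℕ, r = s ∧ x (t + s) ∈ B}

/-- Backward hitting time `τ⁻_B(x,t) = min {s ≥ 0 : x (t-s) ∈ B}`. -/
noncomputable def bwdHit {X : Type*} (B : Set X) (t : ℤ) (x : ℤ → X) : ℝ≥0∞ :=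
  sInf {r : ℝ≥0∞ | ∃ s : ℕ, r = s ∧ x (t - s) ∈ B}

/-- Transit time `τ±_B(x,t) = max(θ⁺ - θ⁻ - 1, 0) = τ_B(x,t) + τ⁻_B(x,t) - 1`
(truncated subtraction). -/
noncomputable def transit {X : Type*} (B : Set X) (t : ℤ) (x : ℤ → X) : ℝ≥0∞ :=
  fwdHit B t x + bwdHit B t x - 1

namespace StmtAux

open Classical

variable {X : Type*} (B : Set X) (t : ℤ) (x : ℤ → X)

lemma fwdHit_find (h : ∃ s : ℕ, x (t + s) ∈ B) : fwdHit B t x = Nat.find h := by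
  apply le_antisymm
  · exact sInf_le ⟨Nat.find h, rfl, Nat.find_spec h⟩
  · refine le_sInf ?_
    rintro r ⟨s, rfl, hs⟩
    exact_mod_cast Nat.find_min' h hs

lemma fwdHit_top (h : ∀ s : ℕ, x (t + s) ∉ B) : fwdHit B t x = ⊤ := by
  have : {r : ℝ≥0∞ | ∃ s : ℕ, r = s ∧ x (t + s) ∈ B} = ∅ := by
    ext r; simp only [Set.mem_setOf_eq, Set.mem_empty_iff_false, iff_false]
    rintro ⟨s, rfl, hs⟩; exact h s hs
  rw [fwdHit, this, sInf_empty]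

lemma fwdHit_cases : (∃ j : ℕ, fwdHit B t x = j) ∨ fwdHit B t x = ⊤ := by
  by_cases h : ∃ s : ℕ, x (t + s) ∈ B
  · exact Or.inl ⟨Nat.find h, fwdHit_find B t x h⟩
  · push_neg at h
    exact Or.inr (fwdHit_top B t x h)

lemma fwdHit_coe_iff (j : ℕ) :
    fwdHit B t x = j ↔ x (t + j) ∈ B ∧ ∀ s : ℕ, s < j → x (t + s) ∉ B := by
  constructor
  · intro hj
    by_cases h : ∃ s : ℕ, x (t + s) ∈ B
    · rw [fwdHit_find B t x h] at hj
      have hj' : Nat.find h = j := by exact_mod_cast hj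
      subst hj'
      exact ⟨Nat.find_spec h, fun s hs => Nat.find_min h hs⟩
    · push_neg at h
      rw [fwdHit_top B t x h] at hj
      exact absurd hj.symm (ENNReal.natCast_ne_top j)
  · rintro ⟨h1, h2⟩
    have h : ∃ s : ℕ, x (t + s) ∈ B := ⟨j, h1⟩
    rw [fwdHit_find B t x h]
    have : Nat.find h = j := le_antisymm (Nat.find_min' h h1) (by
      by_contra hc
      exact h2 _ (by omega) (Nat.find_spec h))
    exact_mod_cast congrArg (Nat.cast : ℕ → ℝ≥0∞) this

lemma bwdHit_find (h : ∃ s : ℕ, x (t - s) ∈ B) : bwdHit B t x = Nat.find h := by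
  apply le_antisymm
  · exact sInf_le ⟨Nat.find h, rfl, Nat.find_spec h⟩
  · refine le_sInf ?_
    rintro r ⟨s, rfl, hs⟩
    exact_mod_cast Nat.find_min' h hs

lemma bwdHit_top (h : ∀ s : ℕ, x (t - s) ∉ B) : bwdHit B t x = ⊤ := by
  have : {r : ℝ≥0∞ | ∃ s : ℕ, r = s ∧ x (t - s) ∈ B} = ∅ := by
    ext r; simp only [Set.mem_setOf_eq, Set.mem_empty_iff_false, iff_false]
    rintro ⟨s, rfl, hs⟩; exact h s hs
  rw [bwdHit, this, sInf_empty]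

lemma bwdHit_cases : (∃ j : ℕ, bwdHit B t x = j) ∨ bwdHit B t x = ⊤ := by
  by_cases h : ∃ s : ℕ, x (t - s) ∈ B
  · exact Or.inl ⟨Nat.find h, bwdHit_find B t x h⟩
  · push_neg at h
    exact Or.inr (bwdHit_top B t x h)

lemma bwdHit_top_iff : bwdHit B t x = ⊤ ↔ ∀ s : ℕ, x (t - s) ∉ B := by
  constructor
  · intro h s hs
    have := bwdHit_find B t x ⟨s, hs⟩
    rw [h] at this
    exact absurd this.symm (ENNReal.natCast_ne_top _)
  · exact bwdHit_top B t x

lemma bwdHit_coe_iff (j : ℕ) :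
    bwdHit B t x = j ↔ x (t - j) ∈ B ∧ ∀ s : ℕ, s < j → x (t - s) ∉ B := by
  constructor
  · intro hj
    by_cases h : ∃ s : ℕ, x (t - s) ∈ B
    · rw [bwdHit_find B t x h] at hj
      have hj' : Nat.find h = j := by exact_mod_cast hj
      subst hj'
      exact ⟨Nat.find_spec h, fun s hs => Nat.find_min h hs⟩
    · push_neg at h
      rw [bwdHit_top B t x h] at hj
      exact absurd hj.symm (ENNReal.natCast_ne_top j)
  · rintro ⟨h1, h2⟩
    have h : ∃ s : ℕ, x (t - s) ∈ B := ⟨j, h1⟩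
    rw [bwdHit_find B t x h]
    have : Nat.find h = j := le_antisymm (Nat.find_min' h h1) (by
      by_contra hc
      exact h2 _ (by omega) (Nat.find_spec h))
    exact_mod_cast congrArg (Nat.cast : ℕ → ℝ≥0∞) this

section Meas

variable [MeasurableSpace X]

lemma measurable_fwdHit (hB : MeasurableSet B) (t : ℤ) :
    Measurable (fun x : ℤ → X => fwdHit B t x) := by
  have heq : (fun x : ℤ → X => fwdHit B t x)
      = fun x => ⨅ s : ℕ, if x (t + s) ∈ B then (s : ℝ≥0∞) else ⊤ := by
    funext x
    apply le_antisymm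
    · refine le_iInf fun s => ?_
      by_cases h : x (t + s) ∈ B
      · rw [if_pos h]; exact sInf_le ⟨s, rfl, h⟩
      · rw [if_neg h]; exact le_top
    · refine le_sInf ?_
      rintro r ⟨s, rfl, hs⟩
      exact iInf_le_of_le s (by rw [if_pos hs])
  rw [heq]
  exact Measurable.iInf fun s =>
    Measurable.ite ((measurable_pi_apply _) hB) measurable_const measurable_const

lemma measurable_bwdHit (hB : MeasurableSet B) (t : ℤ) :
    Measurable (fun x : ℤ → X => bwdHit B t x) := by
  have heq : (fun x : ℤ → X => bwdHit B t x)
      = fun x => ⨅ s : ℕ, if x (t - s) ∈ B then (s : ℝ≥0∞) else ⊤ := by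
    funext x
    apply le_antisymm
    · refine le_iInf fun s => ?_
      by_cases h : x (t - s) ∈ B
      · rw [if_pos h]; exact sInf_le ⟨s, rfl, h⟩
      · rw [if_neg h]; exact le_top
    · refine le_sInf ?_
      rintro r ⟨s, rfl, hs⟩
      exact iInf_le_of_le s (by rw [if_pos hs])
  rw [heq]
  exact Measurable.iInf fun s =>
    Measurable.ite ((measurable_pi_apply _) hB) measurable_const measurable_const

end Meas

lemma shift_iterate (m : ℕ) (x : ℤ → X) :
    (fun (y : ℤ → X) (u : ℤ) => y (u + 1))^[m] x = fun u => x (u + m) := by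
  induction m with
  | zero => simp
  | succ k ih =>
    funext u
    rw [Function.iterate_succ_apply', ih]
    show x (u + 1 + (k : ℤ)) = x (u + ((k : ℤ) + 1))
    congr 1; ring

lemma fwdHit_shift (m : ℕ) : fwdHit B t (fun u => x (u + m)) = fwdHit B (t + m) x := by
  unfold fwdHit
  congr 1
  ext r
  simp only [Set.mem_setOf_eq]
  constructor <;> rintro ⟨s, rfl, hs⟩ <;> refine ⟨s, rfl, ?_⟩
  · rwa [show t + (m : ℤ) + s = t + s + m by ring]
  · rwa [show t + (s : ℤ) + m = t + m + s by ring]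

lemma bwdHit_shift (m : ℕ) : bwdHit B t (fun u => x (u + m)) = bwdHit B (t + m) x := by
  unfold bwdHit
  congr 1
  ext r
  simp only [Set.mem_setOf_eq]
  constructor <;> rintro ⟨s, rfl, hs⟩ <;> refine ⟨s, rfl, ?_⟩
  · rwa [show t + (m : ℤ) - s = t - s + m by ring]
  · rwa [show t - (s : ℤ) + m = t + m - s by ring]

lemma pair_iff {i j : ℕ} (hi : 1 ≤ i) (hj : 1 ≤ j) :
    (bwdHit B t x = i ∧ fwdHit B t x = j) ↔
      (x (t - i) ∈ B ∧ x (t + j) ∈ B ∧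
        ∀ u : ℤ, t - i < u → u < t + j → x u ∉ B) := by
  rw [bwdHit_coe_iff, fwdHit_coe_iff]
  constructor
  · rintro ⟨⟨hb1, hb2⟩, hf1, hf2⟩
    refine ⟨hb1, hf1, fun u hu1 hu2 hxu => ?_⟩
    by_cases hu : u ≤ t
    · have h1 : (t - u).toNat < i := by omega
      refine hb2 _ h1 ?_
      rwa [show t - ((t - u).toNat : ℤ) = u by omega]
    · have h1 : (u - t).toNat < j := by omega
      refine hf2 _ h1 ?_
      rwa [show t + ((u - t).toNat : ℤ) = u by omega]
  · rintro ⟨h1, h2, h3⟩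
    exact ⟨⟨h1, fun s hs hxs => h3 (t - s) (by omega) (by omega) hxs⟩,
      h2, fun s hs hxs => h3 (t + s) (by omega) (by omega) hxs⟩

variable [MeasurableSpace X]

lemma meas_pair {μ : Measure (ℤ → X)}
    (hpres : MeasurePreserving (fun (y : ℤ → X) (u : ℤ) => y (u + 1)) μ μ)
    (hB : MeasurableSet B) (t : ℤ) (i j : ℕ) :
    μ {x : ℤ → X | bwdHit B t x = ((i + 1 : ℕ) : ℝ≥0∞) ∧ fwdHit B t x = ((j + 1 : ℕ) : ℝ≥0∞)}
      = μ {x : ℤ → X | bwdHit B t x = ((1 : ℕ) : ℝ≥0∞)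
            ∧ fwdHit B t x = ((i + j + 1 : ℕ) : ℝ≥0∞)} := by
  have hmeas : ∀ (s : ℤ) (a b : ℕ),
      MeasurableSet {x : ℤ → X | bwdHit B s x = ((a : ℕ) : ℝ≥0∞)
        ∧ fwdHit B s x = ((b : ℕ) : ℝ≥0∞)} := by
    intro s a b
    have : {x : ℤ → X | bwdHit B s x = ((a : ℕ) : ℝ≥0∞) ∧ fwdHit B s x = ((b : ℕ) : ℝ≥0∞)}
        = (fun x => bwdHit B s x) ⁻¹' {((a : ℕ) : ℝ≥0∞)}
          ∩ (fun x => fwdHit B s x) ⁻¹' {((b : ℕ) : ℝ≥0∞)} := rfl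
    rw [this]
    exact ((measurable_bwdHit B hB s) (measurableSet_singleton _)).inter
      ((measurable_fwdHit B hB s) (measurableSet_singleton _))
  -- step 1: same set at shifted time
  have hset : {x : ℤ → X | bwdHit B t x = ((i + 1 : ℕ) : ℝ≥0∞)
        ∧ fwdHit B t x = ((j + 1 : ℕ) : ℝ≥0∞)}
      = {x : ℤ → X | bwdHit B (t - i) x = ((1 : ℕ) : ℝ≥0∞)
        ∧ fwdHit B (t - i) x = ((i + j + 1 : ℕ) : ℝ≥0∞)} := by
    ext x
    simp only [Set.mem_setOf_eq]
    rw [pair_iff B t x (by omega) (by omega), pair_iff B (t - i) x (by omega) (by omega)]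
    constructor
    · rintro ⟨h1, h2, h3⟩
      refine ⟨?_, ?_, fun u hu1 hu2 => h3 u (by push_cast at hu1 ⊢; omega)
        (by push_cast at hu2 ⊢; omega)⟩
      · rwa [show t - (i : ℤ) - ((1 : ℕ) : ℤ) = t - ((i + 1 : ℕ) : ℤ) by push_cast; ring]
      · rwa [show t - (i : ℤ) + ((i + j + 1 : ℕ) : ℤ) = t + ((j + 1 : ℕ) : ℤ) by
          push_cast; ring]
    · rintro ⟨h1, h2, h3⟩
      refine ⟨?_, ?_, fun u hu1 hu2 => h3 u (by push_cast at hu1 ⊢; omega)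
        (by push_cast at hu2 ⊢; omega)⟩
      · rwa [show t - ((i + 1 : ℕ) : ℤ) = t - (i : ℤ) - ((1 : ℕ) : ℤ) by push_cast; ring]
      · rwa [show t + ((j + 1 : ℕ) : ℤ) = t - (i : ℤ) + ((i + j + 1 : ℕ) : ℤ) by
          push_cast; ring]
  rw [hset]
  -- step 2: time invariance
  have hpre : ((fun (y : ℤ → X) (u : ℤ) => y (u + 1))^[i]) ⁻¹'
        {x : ℤ → X | bwdHit B (t - i) x = ((1 : ℕ) : ℝ≥0∞)
          ∧ fwdHit B (t - i) x = ((i + j + 1 : ℕ) : ℝ≥0∞)}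
      = {x : ℤ → X | bwdHit B t x = ((1 : ℕ) : ℝ≥0∞)
          ∧ fwdHit B t x = ((i + j + 1 : ℕ) : ℝ≥0∞)} := by
    ext x
    simp only [Set.mem_preimage, Set.mem_setOf_eq, shift_iterate, bwdHit_shift, fwdHit_shift]
    rw [show t - (i : ℤ) + (i : ℤ) = t by ring]
  calc μ {x : ℤ → X | bwdHit B (t - i) x = ((1 : ℕ) : ℝ≥0∞)
          ∧ fwdHit B (t - i) x = ((i + j + 1 : ℕ) : ℝ≥0∞)}
      = μ (((fun (y : ℤ → X) (u : ℤ) => y (u + 1))^[i]) ⁻¹'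
          {x : ℤ → X | bwdHit B (t - i) x = ((1 : ℕ) : ℝ≥0∞)
            ∧ fwdHit B (t - i) x = ((i + j + 1 : ℕ) : ℝ≥0∞)}) :=
        ((hpres.iterate i).measure_preimage (hmeas (t - i) 1 (i + j + 1)).nullMeasurableSet).symm
    _ = _ := by rw [hpre]

/-- reindexing a tail sum -/
lemma tsum_shift (h : ℕ → ℝ≥0∞) (i : ℕ) :
    ∑' j : ℕ, h (i + j) = ∑' m : ℕ, if i ≤ m then h m else 0 := by
  have hinj : Function.Injective (fun j : ℕ => i + j) := fun a b hab => by simp only at hab; omega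
  have key := hinj.tsum_eq (f := fun m => if i ≤ m then h m else 0) ?_
  · calc ∑' j : ℕ, h (i + j)
        = ∑' j : ℕ, (if i ≤ i + j then h (i + j) else 0) := by
          refine tsum_congr fun j => ?_; rw [if_pos (by omega)]
      _ = _ := key
  · intro m hm
    simp only [Function.mem_support, ne_eq, ite_eq_right_iff, not_forall] at hm
    obtain ⟨hle, -⟩ := hm
    exact ⟨m - i, by simp only; omega⟩

lemma tsum_antidiag (c q : ℕ → ℝ≥0∞) :
    ∑' p : ℕ × ℕ, c p.2 * q (p.1 + p.2)
      = ∑' m : ℕ, (∑ j ∈ Finset.range (m + 1), c j) * q m := by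
  rw [ENNReal.tsum_prod']
  rw [ENNReal.tsum_comm]
  calc ∑' (j : ℕ) (i : ℕ), c j * q (i + j)
      = ∑' (j : ℕ) (m : ℕ), (if j ≤ m then c j * q m else 0) := by
        refine tsum_congr fun j => ?_
        calc ∑' i : ℕ, c j * q (i + j)
            = ∑' i : ℕ, c j * q (j + i) := by
              refine tsum_congr fun i => ?_; rw [add_comm i j]
          _ = _ := tsum_shift (fun m => c j * q m) j
    _ = ∑' (m : ℕ) (j : ℕ), (if j ≤ m then c j * q m else 0) := ENNReal.tsum_comm
    _ = ∑' m : ℕ, (∑ j ∈ Finset.range (m + 1), c j) * q m := by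
        refine tsum_congr fun m => ?_
        rw [tsum_eq_sum (s := Finset.range (m + 1))
          (fun j hj => if_neg (by simp only [Finset.mem_range] at hj; omega))]
        rw [Finset.sum_congr rfl
          (fun j hj => if_pos (by simp only [Finset.mem_range] at hj; omega))]
        rw [← Finset.sum_mul]

lemma real_bridge (α : ℝ) (hα : 0 ≤ α) (m : ℕ) :
    ((m : ℝ) + 1) ^ (α + 1) ≤ (α + 1) * ∑ j ∈ Finset.range (m + 1), ((j : ℝ) + 1) ^ α := by
  induction m with
  | zero =>
    simp only [Nat.cast_zero, zero_add, Real.one_rpow, Finset.range_one, Finset.sum_singleton]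
    linarith
  | succ k ih =>
    rw [Finset.sum_range_succ, mul_add]
    set P : ℝ := (k : ℝ) + 1 + 1 with hP
    have hpos : (0 : ℝ) < P := by positivity
    have h1P : 1 / P ≤ 1 := by
      rw [div_le_one hpos]; simp [hP]; linarith [Nat.cast_nonneg (α := ℝ) k]
    have hb := one_add_mul_self_le_rpow_one_add
      (s := -(1 / P)) (by linarith) (p := α + 1) (by linarith)
    have hnn : (0 : ℝ) ≤ 1 + -(1 / P) := by
      have : 0 < 1 / P := by positivity
      linarith
    have h2 : (k : ℝ) + 1 = P * (1 + -(1 / P)) := by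
      field_simp
      rw [hP]; ring
    have h3 : ((k : ℝ) + 1) ^ (α + 1) = P ^ (α + 1) * (1 + -(1 / P)) ^ (α + 1) := by
      rw [h2, Real.mul_rpow (le_of_lt hpos) hnn]
    have h4 := mul_le_mul_of_nonneg_left hb (Real.rpow_nonneg (le_of_lt hpos) (α + 1))
    have hP1 : P ^ (α + 1) = P ^ α * P := Real.rpow_add_one (ne_of_gt hpos) α
    have h5 : P ^ (α + 1) * (1 + (α + 1) * -(1 / P)) = P ^ (α + 1) - (α + 1) * P ^ α := by
      rw [hP1]; field_simp; ring
    have step : P ^ (α + 1) - (α + 1) * P ^ α ≤ ((k : ℝ) + 1) ^ (α + 1) := by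
      rw [h3, ← h5]; exact h4
    have hcast : ((k + 1 : ℕ) : ℝ) + 1 = P := by push_cast; ring
    rw [hcast]
    have hsum : ((k : ℝ) + 1) ^ (α + 1) ≤ (α + 1) * ∑ j ∈ Finset.range (k + 1), ((j : ℝ) + 1) ^ α := ih
    linarith

end StmtAux

open StmtAux in
theorem stmt1 {N : ℕ} (μ : Measure (ℤ → (Fin N → ℝ))) [IsProbabilityMeasure μ]
    (hErg : Ergodic (fun x (t : ℤ) => x (t + 1)) μ)
    (B : Set (Fin N → ℝ)) (hB : MeasurableSet B)
    (t : ℤ) (α : ℝ) (hα : 0 ≤ α)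
    (hmom : ∫⁻ x, fwdHit B t x ^ α ∂μ < ⊤) :
    ∫⁻ x, transit B t x ^ α ∂μ
        ≤ ENNReal.ofReal (α + 1) * ∫⁻ x, fwdHit B t x ^ α ∂μ ∧
      ∫⁻ x, transit B t x ^ α ∂μ < ⊤ := by
  rcases eq_or_lt_of_le hα with hα0 | hαpos
  · -- α = 0
    subst hα0
    simp only [ENNReal.rpow_zero, lintegral_one, measure_univ, mul_one, zero_add,
      ENNReal.ofReal_one]
    exact ⟨le_refl _, ENNReal.one_lt_top⟩
  · -- 0 < α
    have hpres : MeasurePreserving (fun (y : ℤ → Fin N → ℝ) (u : ℤ) => y (u + 1)) μ μ :=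
      hErg.toMeasurePreserving
    have hFmeas : Measurable (fun x : ℤ → Fin N → ℝ => fwdHit B t x) :=
      measurable_fwdHit B hB t
    have hBwmeas : Measurable (fun x : ℤ → Fin N → ℝ => bwdHit B t x) :=
      measurable_bwdHit B hB t
    have hFtop : μ {x : ℤ → Fin N → ℝ | fwdHit B t x = ⊤} = 0 := by
      by_contra h
      have hset : MeasurableSet {x : ℤ → Fin N → ℝ | fwdHit B t x = ⊤} :=
        hFmeas (measurableSet_singleton ⊤)
      have htop : (⊤ : ℝ≥0∞) ≤ ∫⁻ x, fwdHit B t x ^ α ∂μ := by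
        calc (⊤ : ℝ≥0∞) = ⊤ * μ {x : ℤ → Fin N → ℝ | fwdHit B t x = ⊤} :=
              (ENNReal.top_mul h).symm
          _ = ∫⁻ _ in {x : ℤ → Fin N → ℝ | fwdHit B t x = ⊤}, ⊤ ∂μ := by
              rw [setLIntegral_const, mul_comm]
          _ = ∫⁻ x in {x : ℤ → Fin N → ℝ | fwdHit B t x = ⊤}, fwdHit B t x ^ α ∂μ := by
              refine (setLIntegral_congr_fun hset (fun x hx => ?_)).symm
              rw [Set.mem_setOf_eq] at hx
              rw [hx, ENNReal.top_rpow_of_pos hαpos]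
          _ ≤ _ := setLIntegral_le_lintegral _ _
      exact absurd (eq_top_iff.mpr htop) hmom.ne
    have hBwtop : μ {x : ℤ → Fin N → ℝ | bwdHit B t x = ⊤} = 0 := by
      set E : ℕ → Set (ℤ → Fin N → ℝ) := fun m => {x | bwdHit B (t + m) x = ⊤} with hE
      have hEmeas : ∀ m, MeasurableSet (E m) :=
        fun m => (measurable_bwdHit B hB (t + m)) (measurableSet_singleton ⊤)
      have hEeq : ∀ m, μ (E m) = μ (E 0) := by
        intro m
        have hpre : ((fun (y : ℤ → Fin N → ℝ) (u : ℤ) => y (u + 1))^[m]) ⁻¹' (E 0) = E m := by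
          ext x
          simp only [hE, Set.mem_preimage, Set.mem_setOf_eq, shift_iterate, bwdHit_shift]
          rw [show t + ((0 : ℕ) : ℤ) + (m : ℤ) = t + (m : ℤ) by push_cast; ring]
        rw [← hpre]
        exact (hpres.iterate m).measure_preimage (hEmeas 0).nullMeasurableSet
      have hanti : Antitone E := by
        intro a b hab x hx
        simp only [hE, Set.mem_setOf_eq, bwdHit_top_iff] at hx ⊢
        intro s
        have hx2 := hx (s + (b - a))
        rwa [show t + (b : ℤ) - ((s + (b - a) : ℕ) : ℤ) = t + (a : ℤ) - (s : ℤ) by omega] at hx2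
      have hint : (⋂ m, E m) ⊆ {x : ℤ → Fin N → ℝ | fwdHit B t x = ⊤} := by
        intro x hx
        simp only [Set.mem_iInter, hE, Set.mem_setOf_eq, bwdHit_top_iff] at hx
        rw [Set.mem_setOf_eq]
        apply fwdHit_top
        intro s
        have hx2 := hx s 0
        rwa [show t + (s : ℤ) - ((0 : ℕ) : ℤ) = t + (s : ℤ) by push_cast; ring] at hx2
      have hmu : μ (⋂ m, E m) = ⨅ m, μ (E m) :=
        hanti.measure_iInter (fun m => (hEmeas m).nullMeasurableSet) ⟨0, measure_ne_top μ _⟩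
      have h0 : μ (E 0) = 0 := by
        have hconst : ⨅ m, μ (E m) = μ (E 0) := by
          simp only [hEeq, iInf_const]
        rw [← hconst, ← hmu]
        exact measure_mono_null hint hFtop
      have hE0 : {x : ℤ → Fin N → ℝ | bwdHit B t x = ⊤} = E 0 := by
        simp [hE]
      rw [hE0]; exact h0
    set H : ℕ → ℕ → Set (ℤ → Fin N → ℝ) :=
      fun a b => {x | bwdHit B t x = ((a : ℕ) : ℝ≥0∞) ∧ fwdHit B t x = ((b : ℕ) : ℝ≥0∞)}
      with hH
    have hHmeas : ∀ a b, MeasurableSet (H a b) := fun a b =>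
      (hBwmeas (measurableSet_singleton _)).inter (hFmeas (measurableSet_singleton _))
    set q : ℕ → ℝ≥0∞ := fun m => μ (H 1 (m + 1)) with hq
    have hHq : ∀ i j : ℕ, μ (H (i + 1) (j + 1)) = q (i + j) :=
      fun i j => meas_pair B hpres hB t i j
    have hub : ∫⁻ x, transit B t x ^ α ∂μ
        ≤ ∑' p : ℕ × ℕ, (((p.1 + p.2 + 1 : ℕ) : ℝ≥0∞)) ^ α * μ (H (p.1 + 1) (p.2 + 1)) := by
      have hg : ∫⁻ x, (∑' p : ℕ × ℕ,
            (H (p.1 + 1) (p.2 + 1)).indicator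
              (fun _ => (((p.1 + p.2 + 1 : ℕ) : ℝ≥0∞)) ^ α) x) ∂μ
          = ∑' p : ℕ × ℕ, (((p.1 + p.2 + 1 : ℕ) : ℝ≥0∞)) ^ α * μ (H (p.1 + 1) (p.2 + 1)) := by
        rw [lintegral_tsum (fun p => (measurable_const.indicator (hHmeas _ _)).aemeasurable)]
        exact tsum_congr fun p => lintegral_indicator_const (hHmeas _ _) _
      rw [← hg]
      refine lintegral_mono_ae ?_
      have h1 : ∀ᵐ x ∂μ, fwdHit B t x ≠ ⊤ := by
        rw [ae_iff]; simpa using hFtop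
      have h2 : ∀ᵐ x ∂μ, bwdHit B t x ≠ ⊤ := by
        rw [ae_iff]; simpa using hBwtop
      filter_upwards [h1, h2] with x hx1 hx2
      by_cases hxt : x t ∈ B
      · have hf0 : fwdHit B t x = ((0 : ℕ) : ℝ≥0∞) :=
          (fwdHit_coe_iff B t x 0).mpr
            ⟨by simpa using hxt, fun s hs => absurd hs (Nat.not_lt_zero s)⟩
        have hb0 : bwdHit B t x = ((0 : ℕ) : ℝ≥0∞) :=
          (bwdHit_coe_iff B t x 0).mpr
            ⟨by simpa using hxt, fun s hs => absurd hs (Nat.not_lt_zero s)⟩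
        have htr0 : transit B t x = 0 := by
          rw [transit, hf0, hb0]; simp [zero_tsub]
        rw [htr0, ENNReal.zero_rpow_of_pos hαpos]
        exact zero_le
      · obtain ⟨jj, hjj⟩ := (fwdHit_cases B t x).resolve_right hx1
        obtain ⟨ii, hii⟩ := (bwdHit_cases B t x).resolve_right hx2
        have hjj0 : jj ≠ 0 := by
          rintro rfl
          exact hxt (by simpa using ((fwdHit_coe_iff B t x 0).mp hjj).1)
        have hii0 : ii ≠ 0 := by
          rintro rfl
          exact hxt (by simpa using ((bwdHit_coe_iff B t x 0).mp hii).1)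
        obtain ⟨j, rfl⟩ := Nat.exists_eq_succ_of_ne_zero hjj0
        obtain ⟨i, rfl⟩ := Nat.exists_eq_succ_of_ne_zero hii0
        have htr : transit B t x = ((i + j + 1 : ℕ) : ℝ≥0∞) := by
          rw [transit, hjj, hii]
          push_cast
          rw [show ((j : ℝ≥0∞) + 1 + ((i : ℝ≥0∞) + 1)) = ((i : ℝ≥0∞) + (j : ℝ≥0∞) + 1) + 1
            by ring]
          exact ENNReal.add_sub_cancel_right ENNReal.one_ne_top
        have hmem : x ∈ H (i + 1) (j + 1) := ⟨hii, hjj⟩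
        calc transit B t x ^ α = (((i + j + 1 : ℕ) : ℝ≥0∞)) ^ α := by rw [htr]
          _ = (H (i + 1) (j + 1)).indicator
              (fun _ => (((i + j + 1 : ℕ) : ℝ≥0∞)) ^ α) x :=
                (Set.indicator_of_mem hmem (fun _ => (((i + j + 1 : ℕ) : ℝ≥0∞)) ^ α)).symm
          _ ≤ _ := ENNReal.le_tsum (i, j)
    have hlb : ∑' p : ℕ × ℕ, (((p.2 + 1 : ℕ) : ℝ≥0∞)) ^ α * μ (H (p.1 + 1) (p.2 + 1))
        ≤ ∫⁻ x, fwdHit B t x ^ α ∂μ := by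
      have hg : ∫⁻ x, (∑' p : ℕ × ℕ,
            (H (p.1 + 1) (p.2 + 1)).indicator
              (fun _ => (((p.2 + 1 : ℕ) : ℝ≥0∞)) ^ α) x) ∂μ
          = ∑' p : ℕ × ℕ, (((p.2 + 1 : ℕ) : ℝ≥0∞)) ^ α * μ (H (p.1 + 1) (p.2 + 1)) := by
        rw [lintegral_tsum (fun p => (measurable_const.indicator (hHmeas _ _)).aemeasurable)]
        exact tsum_congr fun p => lintegral_indicator_const (hHmeas _ _) _
      rw [← hg]
      refine lintegral_mono fun x => ?_
      by_cases hx : ∃ i j : ℕ, x ∈ H (i + 1) (j + 1)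
      · obtain ⟨i, j, hmem⟩ := hx
        have hsingle : (∑' p : ℕ × ℕ,
              (H (p.1 + 1) (p.2 + 1)).indicator
                (fun _ => (((p.2 + 1 : ℕ) : ℝ≥0∞)) ^ α) x)
            = (((j + 1 : ℕ) : ℝ≥0∞)) ^ α := by
          rw [tsum_eq_single (i, j) ?_]
          · exact Set.indicator_of_mem hmem _
          · rintro ⟨i', j'⟩ hne
            refine Set.indicator_of_notMem (fun hmem' => hne ?_) _
            obtain ⟨hb1, hf1⟩ := hmem
            obtain ⟨hb2, hf2⟩ := hmem'
            have hii : i' = i := by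
              have hcast : ((i' + 1 : ℕ) : ℝ≥0∞) = ((i + 1 : ℕ) : ℝ≥0∞) := hb2.symm.trans hb1
              have := Nat.cast_injective (R := ℝ≥0∞) hcast
              omega
            have hjj : j' = j := by
              have hcast : ((j' + 1 : ℕ) : ℝ≥0∞) = ((j + 1 : ℕ) : ℝ≥0∞) := hf2.symm.trans hf1
              have := Nat.cast_injective (R := ℝ≥0∞) hcast
              omega
            subst hii; subst hjj; rfl
        rw [hsingle, hmem.2]
      · have hzero : ∀ p : ℕ × ℕ,
            (H (p.1 + 1) (p.2 + 1)).indicator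
              (fun _ => (((p.2 + 1 : ℕ) : ℝ≥0∞)) ^ α) x = 0 :=
          fun p => Set.indicator_of_notMem (fun hmem => hx ⟨p.1, p.2, hmem⟩) _
        rw [tsum_congr hzero, tsum_zero]
        exact zero_le
    have hU2 : ∑' p : ℕ × ℕ, (((p.1 + p.2 + 1 : ℕ) : ℝ≥0∞)) ^ α * μ (H (p.1 + 1) (p.2 + 1))
        = ∑' m : ℕ, (∑ _j ∈ Finset.range (m + 1), (1 : ℝ≥0∞))
            * ((((m + 1 : ℕ) : ℝ≥0∞)) ^ α * q m) := by
      rw [← tsum_antidiag (fun _ => (1 : ℝ≥0∞))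
        (fun m => (((m + 1 : ℕ) : ℝ≥0∞)) ^ α * q m)]
      refine tsum_congr fun p => ?_
      rw [one_mul, hHq p.1 p.2]
    have hL2 : ∑' p : ℕ × ℕ, (((p.2 + 1 : ℕ) : ℝ≥0∞)) ^ α * μ (H (p.1 + 1) (p.2 + 1))
        = ∑' m : ℕ, (∑ j ∈ Finset.range (m + 1), (((j + 1 : ℕ) : ℝ≥0∞)) ^ α) * q m := by
      rw [← tsum_antidiag (fun j => (((j + 1 : ℕ) : ℝ≥0∞)) ^ α) q]
      refine tsum_congr fun p => ?_
      rw [hHq p.1 p.2]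
    have hbridge : ∀ m : ℕ,
        (((m + 1 : ℕ)) : ℝ≥0∞) * (((m + 1 : ℕ) : ℝ≥0∞)) ^ α
          ≤ ENNReal.ofReal (α + 1)
            * ∑ j ∈ Finset.range (m + 1), (((j + 1 : ℕ) : ℝ≥0∞)) ^ α := by
      intro m
      have hofR : ∀ k : ℕ, ((k + 1 : ℕ) : ℝ≥0∞) = ENNReal.ofReal ((k : ℝ) + 1) := by
        intro k
        rw [← ENNReal.ofReal_natCast]; congr 1; push_cast; ring
      have hx0 : (0 : ℝ) < (m : ℝ) + 1 := by positivity
      calc ((m + 1 : ℕ) : ℝ≥0∞) * (((m + 1 : ℕ) : ℝ≥0∞)) ^ α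
          = (((m + 1 : ℕ) : ℝ≥0∞)) ^ (α + 1) := by
            rw [ENNReal.rpow_add α 1 (Nat.cast_ne_zero.mpr (Nat.succ_ne_zero m))
              (ENNReal.natCast_ne_top _), ENNReal.rpow_one]
            ring
        _ = ENNReal.ofReal (((m : ℝ) + 1) ^ (α + 1)) := by
            rw [hofR, ENNReal.ofReal_rpow_of_pos hx0]
        _ ≤ ENNReal.ofReal ((α + 1) * ∑ j ∈ Finset.range (m + 1), ((j : ℝ) + 1) ^ α) :=
            ENNReal.ofReal_le_ofReal (real_bridge α (le_of_lt hαpos) m)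
        _ = ENNReal.ofReal (α + 1)
            * ENNReal.ofReal (∑ j ∈ Finset.range (m + 1), ((j : ℝ) + 1) ^ α) :=
            ENNReal.ofReal_mul (by linarith)
        _ = ENNReal.ofReal (α + 1)
            * ∑ j ∈ Finset.range (m + 1), (((j + 1 : ℕ) : ℝ≥0∞)) ^ α := by
            congr 1
            rw [ENNReal.ofReal_sum_of_nonneg
              (fun j _ => Real.rpow_nonneg (by positivity) α)]
            refine Finset.sum_congr rfl fun j _ => ?_
            rw [hofR, ENNReal.ofReal_rpow_of_pos (by positivity)]
    have main : ∫⁻ x, transit B t x ^ α ∂μ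
        ≤ ENNReal.ofReal (α + 1) * ∫⁻ x, fwdHit B t x ^ α ∂μ := by
      calc ∫⁻ x, transit B t x ^ α ∂μ
          ≤ ∑' p : ℕ × ℕ, (((p.1 + p.2 + 1 : ℕ) : ℝ≥0∞)) ^ α * μ (H (p.1 + 1) (p.2 + 1)) :=
            hub
        _ = ∑' m : ℕ, (∑ _j ∈ Finset.range (m + 1), (1 : ℝ≥0∞))
            * ((((m + 1 : ℕ) : ℝ≥0∞)) ^ α * q m) := hU2
        _ = ∑' m : ℕ, (((m + 1 : ℕ) : ℝ≥0∞) * (((m + 1 : ℕ) : ℝ≥0∞)) ^ α) * q m := by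
            refine tsum_congr fun m => ?_
            rw [Finset.sum_const, Finset.card_range, nsmul_eq_mul, mul_one, mul_assoc]
        _ ≤ ∑' m : ℕ, (ENNReal.ofReal (α + 1)
              * ∑ j ∈ Finset.range (m + 1), (((j + 1 : ℕ) : ℝ≥0∞)) ^ α) * q m :=
            ENNReal.tsum_le_tsum fun m => mul_le_mul_left (hbridge m) (q m)
        _ = ENNReal.ofReal (α + 1)
            * ∑' m : ℕ, (∑ j ∈ Finset.range (m + 1), (((j + 1 : ℕ) : ℝ≥0∞)) ^ α) * q m := by
            rw [← ENNReal.tsum_mul_left]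
            exact tsum_congr fun m => by ring
        _ = ENNReal.ofReal (α + 1)
            * ∑' p : ℕ × ℕ, (((p.2 + 1 : ℕ) : ℝ≥0∞)) ^ α * μ (H (p.1 + 1) (p.2 + 1)) := by
            rw [hL2]
        _ ≤ ENNReal.ofReal (α + 1) * ∫⁻ x, fwdHit B t x ^ α ∂μ := mul_le_mul_right hlb _
    exact ⟨main, lt_of_le_of_lt main (ENNReal.mul_lt_top ENNReal.ofReal_lt_top hmom)⟩
end

section
/- Let $V:\{0,\dots,T-1\}\to\mathbb{R}^N$, let $\widetilde\beta\subseteq\mathbb{R}^N$, and let $\Theta=\{\theta<T : V_\theta\in\widetilde\beta\}$ be nonempty with elements $\theta_1<\cdots<\theta_{|\Theta|}$, and set $\theta_{|\Theta|+1}=T+\theta_1$ and $\Delta\theta_i=\theta_{i+1}-\theta_i$. Define the looped hitting time $\widehat\tau(t)=\min\{s\ge 0 : V_{(t+s)\bmod T}\in\widetilde\beta\}$. Then for any function $f:\mathbb{N}\to\mathbb{R}$, $\frac{1}{T}\sum_{t=0}^{T-1} f(\widehat\tau(t)) = \sum_{i=1}^{|\Theta|}\sum_{j=0}^{\Delta\theta_i-1}\frac{f(j)}{T}$.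 -/
/-- the looped hitting-time identity. With `Θ = {θ < T : V θ ∈ B}` nonempty,
listed in increasing order by `θ 0 < θ 1 < ⋯ < θ (n-1)` and `θ n = T + θ 0`,
gaps `Δθ i = θ (i+1) - θ i`, and looped hitting time
`τ̂(t) = min {s ≥ 0 : V ((t+s) mod T) ∈ B}`, we have
`(1/T) ∑_{t<T} f (τ̂ t) = ∑_{i<n} ∑_{j < Δθ i} f j / T`. -/
theorem stmt3 {X : Type*} (T : ℕ) (hT : 0 < T) (V : ℕ → X) (B : Set X)
    (n : ℕ) (hn : 0 < n) (θ : ℕ → ℕ)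
    (hmono : StrictMonoOn θ (Set.Iio n))
    (hmem : ∀ i < n, θ i < T ∧ V (θ i) ∈ B)
    (hall : ∀ s < T, V s ∈ B → ∃ i < n, θ i = s)
    (hlast : θ n = T + θ 0)
    (f : ℕ → ℝ) :
    (∑ t ∈ Finset.range T, f (sInf {s : ℕ | V ((t + s) % T) ∈ B})) / T
      = ∑ i ∈ Finset.range n, ∑ j ∈ Finset.range (θ (i + 1) - θ i), f j / T := by
  have hθ0T : θ 0 < T := (hmem 0 hn).1
  -- extended strict monotonicity up to n
  have hm : ∀ a b, b ≤ n → a < b → θ a < θ b := by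
    intro a b hb hab
    rcases eq_or_lt_of_le hb with rfl | hb'
    · rw [hlast]
      exact lt_of_lt_of_le (hmem a hab).1 (Nat.le_add_right _ _)
    · exact hmono (Set.mem_Iio.2 (lt_trans hab hb')) (Set.mem_Iio.2 hb') hab
  have hle : ∀ a b, b ≤ n → a ≤ b → θ a ≤ θ b := by
    intro a b hb hab
    rcases eq_or_lt_of_le hab with rfl | h
    · exact le_rfl
    · exact (hm a b hb h).le
  -- no hit strictly between consecutive θ's
  have hno : ∀ i, i < n → ∀ u, θ i < u → u < θ (i+1) → V (u % T) ∉ B := by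
    intro i hi u hu1 hu2 hmemB
    by_cases hu : u < T
    · rw [Nat.mod_eq_of_lt hu] at hmemB
      obtain ⟨k, hk, hku⟩ := hall u hu hmemB
      have h1 : i < k := by
        by_contra h
        push_neg at h
        have := hle k i (le_of_lt hi) h
        omega
      have h2 : k < i + 1 := by
        by_contra h
        push_neg at h
        have := hle (i+1) k (le_of_lt hk) h
        omega
      omega
    · push_neg at hu
      have hin : i + 1 = n := by
        by_contra h
        have h' : i + 1 < n := by omega
        have := (hmem (i+1) h').1
        omega
      have hθn : θ (i+1) = T + θ 0 := by rw [hin, hlast]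
      have hmod : u % T = u - T := by
        rw [Nat.mod_eq_sub_mod hu, Nat.mod_eq_of_lt (by omega)]
      rw [hmod] at hmemB
      obtain ⟨k, hk, hku⟩ := hall (u - T) (by omega) hmemB
      rcases Nat.eq_zero_or_pos k with rfl | hkpos
      · omega
      · have := hm 0 k (le_of_lt hk) hkpos
        omega
  -- value of the looped hitting time
  have hτ : ∀ i, i < n → ∀ j, j < θ (i+1) - θ i →
      sInf {s : ℕ | V (((θ (i+1) - j) % T + s) % T) ∈ B} = j := by
    intro i hi j hj
    have hΔ : θ i < θ (i+1) := hm i (i+1) (by omega) (by omega)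
    have hjle : j ≤ θ (i+1) := by omega
    have hmod : ∀ s, ((θ (i+1) - j) % T + s) % T = (θ (i+1) - j + s) % T := by
      intro s; rw [Nat.mod_add_mod]
    have hmemj : j ∈ {s : ℕ | V (((θ (i+1) - j) % T + s) % T) ∈ B} := by
      show V _ ∈ B
      rw [hmod, Nat.sub_add_cancel hjle]
      rcases eq_or_lt_of_le (show i+1 ≤ n by omega) with heq | hlt
      · rw [heq, hlast, Nat.add_mod_left, Nat.mod_eq_of_lt hθ0T]
        exact (hmem 0 hn).2
      · rw [Nat.mod_eq_of_lt (hmem (i+1) hlt).1]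
        exact (hmem (i+1) hlt).2
    refine le_antisymm (Nat.sInf_le hmemj) ?_
    by_contra h
    push_neg at h
    have hsmem := Nat.sInf_mem ⟨j, hmemj⟩
    set s := sInf {s : ℕ | V (((θ (i+1) - j) % T + s) % T) ∈ B} with hs
    have hsj : s < j := h
    refine hno i hi (θ (i+1) - j + s) (by omega) (by omega) ?_
    rw [← hmod]
    exact hsmem
  -- the inverse data
  set A : ℕ → ℕ := fun t => if t ≤ θ 0 then t + T else t with hA
  set G : ℕ → ℕ := fun t => Nat.findGreatest (fun k => θ k < A t) n with hG
  have hAprop : ∀ t < T, θ 0 < A t ∧ A t ≤ T + θ 0 ∧ A t % T = t := by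
    intro t ht
    by_cases h : t ≤ θ 0
    · simp only [hA]
      rw [if_pos h]
      refine ⟨by omega, by omega, ?_⟩
      rw [Nat.add_mod_right, Nat.mod_eq_of_lt ht]
    · simp only [hA]
      rw [if_neg h]
      exact ⟨by omega, by omega, Nat.mod_eq_of_lt ht⟩
  have hGprop : ∀ t < T, G t < n ∧ θ (G t) < A t ∧ A t ≤ θ (G t + 1) := by
    intro t ht
    obtain ⟨h1, h2, _⟩ := hAprop t ht
    have hspec : θ (G t) < A t :=
      Nat.findGreatest_spec (P := fun k => θ k < A t) (Nat.zero_le n) h1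
    have hGn : G t ≠ n := by
      intro hEq
      rw [hEq] at hspec
      rw [hlast] at hspec
      omega
    have hGltn : G t < n := lt_of_le_of_ne (Nat.findGreatest_le n) hGn
    refine ⟨hGltn, hspec, ?_⟩
    have := Nat.findGreatest_is_greatest (Nat.lt_succ_self (G t)) (by omega :
      G t + 1 ≤ n)
    simpa using not_lt.1 this
  have hGuniq : ∀ t < T, ∀ i < n, θ i < A t → A t ≤ θ (i+1) → G t = i := by
    intro t ht i hi h1 h2
    obtain ⟨hg1, hg2, hg3⟩ := hGprop t ht
    rcases lt_trichotomy (G t) i with h | h | h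
    · have := hle (G t + 1) i (by omega) (by omega)
      omega
    · exact h
    · have := hle (i + 1) (G t) (by omega) (by omega)
      omega
  -- assemble
  rw [Finset.sum_div]
  rw [Finset.sum_sigma' (Finset.range n) (fun i => Finset.range (θ (i+1) - θ i))
    (fun _ j => f j / (T:ℝ))]
  refine Finset.sum_nbij' (fun t => ⟨G t, θ (G t + 1) - A t⟩)
    (fun p => (θ (p.1 + 1) - p.2) % T) ?_ ?_ ?_ ?_ ?_
  · intro t ht
    rw [Finset.mem_range] at ht
    obtain ⟨hg1, hg2, hg3⟩ := hGprop t ht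
    simp only [Finset.mem_sigma, Finset.mem_range]
    exact ⟨hg1, by omega⟩
  · intro p hp
    rw [Finset.mem_range]
    exact Nat.mod_lt _ hT
  · intro t ht
    rw [Finset.mem_range] at ht
    obtain ⟨hg1, hg2, hg3⟩ := hGprop t ht
    obtain ⟨_, _, ha3⟩ := hAprop t ht
    show (θ (G t + 1) - (θ (G t + 1) - A t)) % T = t
    rw [Nat.sub_sub_self hg3]
    exact ha3
  · intro p hp
    simp only [Finset.mem_sigma, Finset.mem_range] at hp
    obtain ⟨hp1, hp2⟩ := hp
    obtain ⟨i, j⟩ := p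
    simp only at hp1 hp2 ⊢
    have hΔ : θ i < θ (i+1) := hm i (i+1) (by omega) (by omega)
    have hθn : θ (i+1) ≤ T + θ 0 := by
      rw [← hlast]; exact hle (i+1) n (le_rfl) (by omega)
    have hθi0 : θ 0 ≤ θ i := hle 0 i (by omega) (Nat.zero_le i)
    set b := θ (i+1) - j with hb
    have hb1 : θ i < b := by omega
    have hb2 : b ≤ θ (i+1) := by omega
    set t := b % T with ht
    have htT : t < T := Nat.mod_lt _ hT
    have hab : A t = b := by
      by_cases hbT : b < T
      · have : t = b := Nat.mod_eq_of_lt hbT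
        have hbθ0 : θ 0 < b := by omega
        simp only [hA]
        rw [this]
        rw [if_neg (by omega)]
      · push_neg at hbT
        have hbb : b < 2 * T := by omega
        have : t = b - T := by
          rw [ht, Nat.mod_eq_sub_mod hbT, Nat.mod_eq_of_lt (by omega)]
        simp only [hA]
        rw [this, if_pos (by omega)]
        omega
    have hGt : G t = i := hGuniq t htT i hp1 (by omega) (by omega)
    have : θ (G t + 1) - A t = j := by rw [hGt, hab]; omega
    rw [hGt] at this ⊢
    rw [this]
  · intro t ht
    rw [Finset.mem_range] at ht
    obtain ⟨hg1, hg2, hg3⟩ := hGprop t ht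
    obtain ⟨_, _, ha3⟩ := hAprop t ht
    have hj : θ (G t + 1) - A t < θ (G t + 1) - θ (G t) := by omega
    have := hτ (G t) hg1 (θ (G t + 1) - A t) hj
    show f (sInf {s : ℕ | V ((t + s) % T) ∈ B}) / T = f (θ (G t + 1) - A t) / T
    have harg : ∀ s, (t + s) % T = ((θ (G t + 1) - (θ (G t + 1) - A t)) % T + s) % T := by
      intro s
      rw [Nat.sub_sub_self hg3, ha3]
    simp_rw [harg]
    rw [this]
end

section
/- In the setting of the looped hitting time identity (finite sequence $V$ of length $T$, nonempty set $\Theta$ of times in $\widetilde\beta$, gaps $\Delta\theta_i$ with $\theta_{|\Theta|+1}=T+\theta_1$), one has $\frac{1}{T}\sum_{t=0}^{T-1}\widehat\tau(t)=\sum_{i=1}^{|\Theta|}\frac{\Delta\theta_i(\Delta\theta_i-1)}{2T}$ and $\frac{1}{T}\sum_{t=0}^{T-1}\widehat\tau(t)^2=\sum_{i=1}^{|\Theta|}\frac{\Delta\theta_i(\Delta\theta_i-1)(2\Delta\theta_i-1)}{6T}$. -/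
open Finset

lemma sum_cast_id' (m : ℕ) : ∑ j ∈ Finset.range m, (j : ℝ) = m * (m - 1) / 2 := by
  induction m with
  | zero => simp
  | succ k ih => rw [Finset.sum_range_succ, ih]; push_cast; ring

lemma sum_cast_sq' (m : ℕ) :
    ∑ j ∈ Finset.range m, (j : ℝ) ^ 2 = m * (m - 1) * (2 * m - 1) / 6 := by
  induction m with
  | zero => simp
  | succ k ih => rw [Finset.sum_range_succ, ih]; push_cast; ring

lemma key_sum {X : Type*} (T : ℕ) (hT : 0 < T) (V : ℕ → X) (B : Set X)
    (n : ℕ) (hn : 0 < n) (θ : ℕ → ℕ)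
    (hmono : StrictMonoOn θ (Set.Iio n))
    (hmem : ∀ i < n, θ i < T ∧ V (θ i) ∈ B)
    (hall : ∀ s < T, V s ∈ B → ∃ i < n, θ i = s)
    (hlast : θ n = T + θ 0) (f : ℕ → ℝ) :
    ∑ t ∈ Finset.range T, f (sInf {s : ℕ | V ((t + s) % T) ∈ B})
      = ∑ i ∈ Finset.range n, ∑ j ∈ Finset.range (θ (i + 1) - θ i), f j := by
  set g : ℕ → ℕ := fun t => sInf {s : ℕ | V ((t + s) % T) ∈ B} with hg
  have h0T : θ 0 < T := (hmem 0 hn).1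
  have hθle : ∀ i j, i ≤ j → j < n → θ i ≤ θ j := by
    intro i j hij hj
    exact hmono.monotoneOn (Set.mem_Iio.mpr (lt_of_le_of_lt hij hj)) (Set.mem_Iio.mpr hj) hij
  have hsucc_le : ∀ i < n, θ (i + 1) ≤ T + θ 0 := by
    intro i hi
    by_cases h : i + 1 < n
    · exact le_trans (le_of_lt (hmem _ h).1) (Nat.le_add_right _ _)
    · have he : i + 1 = n := by omega
      rw [he, hlast]
  have hlt : ∀ i < n, θ i < θ (i + 1) := by
    intro i hi
    by_cases h : i + 1 < n
    · exact hmono (Set.mem_Iio.mpr hi) (Set.mem_Iio.mpr h) (Nat.lt_succ_self i)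
    · have he : i + 1 = n := by omega
      rw [he, hlast]; have := (hmem i hi).1; omega
  -- not in B strictly between consecutive θ's
  have notB : ∀ i < n, ∀ u, θ i < u → u < θ (i + 1) → V (u % T) ∉ B := by
    intro i hi u h1 h2 hB
    by_cases hu : u < T
    · rw [Nat.mod_eq_of_lt hu] at hB
      obtain ⟨j, hj, hje⟩ := hall u hu hB
      have hij : i < j := by
        by_contra h
        push_neg at h
        have := hθle j i h hi
        omega
      rcases Nat.lt_or_ge (i + 1) n with h' | h'
      · have := hθle (i + 1) j hij hj
        omega
      · omega
    · push_neg at hu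
      have hub : θ (i + 1) ≤ T + θ 0 := hsucc_le i hi
      have humod : u % T = u - T := by
        rw [Nat.mod_eq_sub_mod hu, Nat.mod_eq_of_lt (by omega)]
      rw [humod] at hB
      obtain ⟨j, hj, hje⟩ := hall (u - T) (by omega) hB
      have := hθle 0 j (Nat.zero_le j) hj
      omega
  have gzero : ∀ i < n, g (θ i) = 0 := by
    intro i hi
    apply Nat.sInf_eq_zero.mpr
    left
    show V ((θ i + 0) % T) ∈ B
    rw [add_zero, Nat.mod_eq_of_lt (hmem i hi).1]
    exact (hmem i hi).2
  have gval : ∀ i < n, ∀ t, θ i < t → t < θ (i + 1) → g t = θ (i + 1) - t := by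
    intro i hi t h1 h2
    have hmemS : θ (i + 1) - t ∈ {s : ℕ | V ((t + s) % T) ∈ B} := by
      show V ((t + (θ (i + 1) - t)) % T) ∈ B
      rw [Nat.add_sub_cancel' (le_of_lt h2)]
      by_cases h : i + 1 < n
      · rw [Nat.mod_eq_of_lt (hmem (i + 1) h).1]
        exact (hmem (i + 1) h).2
      · have he : i + 1 = n := by omega
        rw [he, hlast, Nat.add_mod_left, Nat.mod_eq_of_lt h0T]
        exact (hmem 0 hn).2
    have hnot : ∀ s, s < θ (i + 1) - t → s ∉ {s : ℕ | V ((t + s) % T) ∈ B} := by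
      intro s hs
      exact notB i hi (t + s) (by omega) (by omega)
    apply le_antisymm (Nat.sInf_le hmemS)
    by_contra hc
    push_neg at hc
    exact hnot _ hc (Nat.sInf_mem ⟨_, hmemS⟩)
  have gper : ∀ t, g (T + t) = g t := by
    intro t
    simp only [hg]
    congr 1
    ext s
    simp only [Set.mem_setOf_eq, add_assoc, Nat.add_mod_left]
  -- inner interval sums
  have inner : ∀ i < n,
      ∑ t ∈ Finset.Ico (θ i) (θ (i + 1)), f (g t)
        = ∑ j ∈ Finset.range (θ (i + 1) - θ i), f j := by
    intro i hi
    have hab : θ i < θ (i + 1) := hlt i hi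
    rw [Finset.sum_Ico_eq_sum_range]
    obtain ⟨m, hm⟩ : ∃ m, θ (i + 1) - θ i = m + 1 := ⟨θ (i + 1) - θ i - 1, by omega⟩
    rw [hm, Finset.sum_range_succ', Finset.sum_range_succ']
    congr 1
    · have hcong : ∀ k ∈ Finset.range m,
          f (g (θ i + (k + 1))) = (fun j => f (j + 1)) (m - 1 - k) := by
        intro k hk
        have hk' : k < m := Finset.mem_range.mp hk
        rw [gval i hi (θ i + (k + 1)) (by omega) (by omega)]
        show f (θ (i + 1) - (θ i + (k + 1))) = f (m - 1 - k + 1)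
        congr 1
        omega
      rw [Finset.sum_congr rfl hcong]
      exact Finset.sum_range_reflect (fun j => f (j + 1)) m
    · rw [add_zero, gzero i hi]
  -- chain of consecutive Ico sums
  have chain : ∀ k ≤ n,
      ∑ t ∈ Finset.Ico (θ 0) (θ k), f (g t)
        = ∑ i ∈ Finset.range k, ∑ t ∈ Finset.Ico (θ i) (θ (i + 1)), f (g t) := by
    intro k
    induction k with
    | zero => simp
    | succ k ih =>
      intro hk
      have hk' : k < n := hk
      have h1 : θ 0 ≤ θ k := hθle 0 k (Nat.zero_le k) hk'
      have h2 : θ k ≤ θ (k + 1) := le_of_lt (hlt k hk')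
      rw [Finset.sum_range_succ, ← ih (le_of_lt hk'),
        Finset.sum_Ico_consecutive _ h1 h2]
  -- periodicity: shift range T to Ico (θ 0) (θ n)
  have hshift : ∑ t ∈ Finset.range T, f (g t)
      = ∑ t ∈ Finset.Ico (θ 0) (θ n), f (g t) := by
    have e1 : ∑ t ∈ Finset.range T, f (g t)
        = ∑ t ∈ Finset.Ico 0 (θ 0), f (g t) + ∑ t ∈ Finset.Ico (θ 0) T, f (g t) := by
      rw [Finset.sum_Ico_consecutive _ (Nat.zero_le _) (le_of_lt h0T),
        Finset.range_eq_Ico]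
    have e2 : ∑ t ∈ Finset.Ico (θ 0) (θ n), f (g t)
        = ∑ t ∈ Finset.Ico (θ 0) T, f (g t) + ∑ t ∈ Finset.Ico T (θ n), f (g t) := by
      rw [Finset.sum_Ico_consecutive _ (le_of_lt h0T) (by rw [hlast]; omega)]
    have e3 : ∑ t ∈ Finset.Ico T (θ n), f (g t) = ∑ t ∈ Finset.Ico 0 (θ 0), f (g t) := by
      rw [hlast, Finset.sum_Ico_eq_sum_range]
      simp only [Nat.add_sub_cancel_left]
      rw [Finset.range_eq_Ico] at *
      apply Finset.sum_congr rfl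
      intro k _
      rw [gper k]
    rw [e1, e2, e3]
    ring
  rw [hshift, chain n le_rfl]
  exact Finset.sum_congr rfl fun i hi => inner i (Finset.mem_range.mp hi)

/-- in the looped hitting time setting, the first and second empirical
moments are `∑ᵢ Δθᵢ(Δθᵢ-1)/(2T)` and `∑ᵢ Δθᵢ(Δθᵢ-1)(2Δθᵢ-1)/(6T)` respectively. -/
theorem stmt4 {X : Type*} (T : ℕ) (hT : 0 < T) (V : ℕ → X) (B : Set X)
    (n : ℕ) (hn : 0 < n) (θ : ℕ → ℕ)
    (hmono : StrictMonoOn θ (Set.Iio n))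
    (hmem : ∀ i < n, θ i < T ∧ V (θ i) ∈ B)
    (hall : ∀ s < T, V s ∈ B → ∃ i < n, θ i = s)
    (hlast : θ n = T + θ 0) :
    (∑ t ∈ Finset.range T, ((sInf {s : ℕ | V ((t + s) % T) ∈ B} : ℕ) : ℝ)) / T
        = ∑ i ∈ Finset.range n,
            ((θ (i + 1) - θ i : ℕ) : ℝ) * (((θ (i + 1) - θ i : ℕ) : ℝ) - 1) / (2 * T) ∧
      (∑ t ∈ Finset.range T, ((sInf {s : ℕ | V ((t + s) % T) ∈ B} : ℕ) : ℝ) ^ 2) / T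
        = ∑ i ∈ Finset.range n,
            ((θ (i + 1) - θ i : ℕ) : ℝ) * (((θ (i + 1) - θ i : ℕ) : ℝ) - 1) *
              (2 * ((θ (i + 1) - θ i : ℕ) : ℝ) - 1) / (6 * T) := by
  have hT' : (T : ℝ) ≠ 0 := Nat.cast_ne_zero.mpr hT.ne'
  have h1 : ∑ t ∈ Finset.range T, ((sInf {s : ℕ | V ((t + s) % T) ∈ B} : ℕ) : ℝ)
      = ∑ i ∈ Finset.range n, ∑ j ∈ Finset.range (θ (i + 1) - θ i), (j : ℝ) :=
    key_sum T hT V B n hn θ hmono hmem hall hlast (fun j => (j : ℝ))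
  have h2 : ∑ t ∈ Finset.range T, ((sInf {s : ℕ | V ((t + s) % T) ∈ B} : ℕ) : ℝ) ^ 2
      = ∑ i ∈ Finset.range n, ∑ j ∈ Finset.range (θ (i + 1) - θ i), (j : ℝ) ^ 2 :=
    key_sum T hT V B n hn θ hmono hmem hall hlast (fun j => (j : ℝ) ^ 2)
  constructor
  · rw [h1, Finset.sum_div]
    refine Finset.sum_congr rfl fun i _ => ?_
    rw [sum_cast_id']
    field_simp
  · rw [h2, Finset.sum_div]
    refine Finset.sum_congr rfl fun i _ => ?_
    rw [sum_cast_sq']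
    field_simp
end
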